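/- Let G be a bridgeless cubic graph, let {e1, e2} be a 2-edge-cut of G, and let H1, H2 be the components of G − {e1, e2}. Then there is no 3-edge-cut of G of the form {e1, f2, f3} with f2 ∈ E(H1) and f3 ∈ E(H2). -/
import Mathlib


open SimpleGraph

/-- A graph is cubic if every vertex has degree `3`. -/
def IsCubic {V : Type*} (G : SimpleGraph V) : Prop :=
  ∀ v : V, (G.neighborSet v).ncard = 3

/-- A graph is bridgeless if it has no bridge. -/
def Bridgeless {V : Type*} (G : SimpleGraph V) : Prop :=
  ∀ e : Sym2 V, ¬ G.IsBridge e

/-- `S` is a set of edges of `G` whose deletion disconnects `G`. -/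
def IsDisconnectingSet {V : Type*} (G : SimpleGraph V) (S : Set (Sym2 V)) : Prop :=
  S ⊆ G.edgeSet ∧ ¬ (G.deleteEdges S).Connected

/-- A `k`-edge-cut: an inclusion-minimal set of `k` edges whose deletion disconnects `G`. -/
def IsKEdgeCut {V : Type*} (G : SimpleGraph V) (k : ℕ) (S : Set (Sym2 V)) : Prop :=
  S.ncard = k ∧ IsDisconnectingSet G S ∧ ∀ T : Set (Sym2 V), T ⊂ S → ¬ IsDisconnectingSet G T

/-- A perfect matching of `G`, as a set of edges such that every vertex is incident with
exactly one edge of the set. -/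
def IsPerfectMatchingSet {V : Type*} (G : SimpleGraph V) (M : Set (Sym2 V)) : Prop :=
  M ⊆ G.edgeSet ∧ ∀ v : V, ∃! e : Sym2 V, e ∈ M ∧ v ∈ e

/-- A well-spread perfect matching: a perfect matching containing exactly one edge of every
`3`-edge-cut. -/
def IsWellSpreadPM {V : Type*} (G : SimpleGraph V) (M : Set (Sym2 V)) : Prop :=
  IsPerfectMatchingSet G M ∧ ∀ C : Set (Sym2 V), IsKEdgeCut G 3 C → (M ∩ C).ncard = 1

/-- A graph is `3`-edge-connected if it is connected, has at least two vertices, and stays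
connected after deleting any set of fewer than `3` edges. -/
def ThreeEdgeConnected {V : Type*} [Fintype V] (G : SimpleGraph V) : Prop :=
  G.Connected ∧ 1 < Fintype.card V ∧
    ∀ S : Set (Sym2 V), S.ncard < 3 → (G.deleteEdges S).Connected

/-- There is no `3`-edge-cut of `G` of the form `{e1, f2, f3}` with `f2` an edge
of the component `H1` and `f3` an edge of the component `H2`. -/
theorem no_crossing_three_cut {V : Type*} [Fintype V] [DecidableEq V] (G : SimpleGraph V)
    (hconn : G.Connected) (hbl : Bridgeless G) (hcub : IsCubic G)
    (u1 v1 u2 v2 : V)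
    (he1 : G.Adj u1 v1) (he2 : G.Adj u2 v2)
    (hcut : IsKEdgeCut G 2 {s(u1, v1), s(u2, v2)})
    (S1 S2 : Set V)
    (hS1 : S1 = {x | (G.deleteEdges {s(u1, v1), s(u2, v2)}).Reachable u1 x})
    (hS2 : S2 = {x | (G.deleteEdges {s(u1, v1), s(u2, v2)}).Reachable v1 x})
    (hu1 : u1 ∈ S1) (hu2 : u2 ∈ S1) (hv1 : v1 ∈ S2) (hv2 : v2 ∈ S2)
    (hUnion : S1 ∪ S2 = Set.univ) (hDisj : Disjoint S1 S2)
    (huu : u1 ≠ u2) (hvv : v1 ≠ v2)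
    (hnadj1 : ¬ G.Adj u1 u2) (hnadj2 : ¬ G.Adj v1 v2)
    (f2 f3 : Sym2 V)
    (hf2 : f2 ∈ G.edgeSet) (hf2S : ∀ x ∈ f2, x ∈ S1)
    (hf3 : f3 ∈ G.edgeSet) (hf3S : ∀ x ∈ f3, x ∈ S2) :
    ¬ IsKEdgeCut G 3 {s(u1, v1), f2, f3} := by
  intro hC
  obtain ⟨-, ⟨hCsub, hCdisc⟩, hmin⟩ := hC
  have hdis12 : ∀ x : V, x ∈ S1 → x ∈ S2 → False := fun x h1 h2 =>
    Set.disjoint_left.mp hDisj h1 h2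
  obtain ⟨a2, b2, rfl⟩ : ∃ a b, f2 = s(a, b) := by
    induction f2 using Sym2.ind with | _ a b => exact ⟨a, b, rfl⟩
  obtain ⟨a3, b3, rfl⟩ : ∃ a b, f3 = s(a, b) := by
    induction f3 using Sym2.ind with | _ a b => exact ⟨a, b, rfl⟩
  have ha2 : a2 ∈ S1 := hf2S a2 (by simp)
  have hb2 : b2 ∈ S1 := hf2S b2 (by simp)
  have ha3 : a3 ∈ S2 := hf3S a3 (by simp)
  have hb3 : b3 ∈ S2 := hf3S b3 (by simp)
  have hf2_ne_e1 : s(a2, b2) ≠ s(u1, v1) := by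
    intro h
    rw [Sym2.eq_iff] at h
    rcases h with ⟨rfl, rfl⟩ | ⟨rfl, rfl⟩
    · exact hdis12 b2 hb2 hv1
    · exact hdis12 a2 ha2 hv1
  have hf3_ne_e1 : s(a3, b3) ≠ s(u1, v1) := by
    intro h
    rw [Sym2.eq_iff] at h
    rcases h with ⟨rfl, rfl⟩ | ⟨rfl, rfl⟩
    · exact hdis12 a3 hu1 ha3
    · exact hdis12 b3 hu1 hb3
  have hf3_ne_f2 : s(a3, b3) ≠ s(a2, b2) := by
    intro h
    rw [Sym2.eq_iff] at h
    rcases h with ⟨rfl, rfl⟩ | ⟨rfl, rfl⟩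
    · exact hdis12 a3 ha2 ha3
    · exact hdis12 a3 hb2 ha3
  -- closure of S1 and S2 under adjacency in G - {e1, e2}
  have hS1closed : ∀ x y : V, x ∈ S1 →
      (G.deleteEdges {s(u1, v1), s(u2, v2)}).Adj x y → y ∈ S1 := by
    intro x y hx hxy
    rw [hS1] at hx ⊢
    exact Set.mem_setOf_eq ▸ (hx.trans hxy.reachable)
  have hS2closed : ∀ x y : V, x ∈ S2 →
      (G.deleteEdges {s(u1, v1), s(u2, v2)}).Adj x y → y ∈ S2 := by
    intro x y hx hxy
    rw [hS2] at hx ⊢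
    exact Set.mem_setOf_eq ▸ (hx.trans hxy.reachable)
  -- connectivity of G - {e1, f2} and G - {e1, f3} from minimality
  have hconn12 : (G.deleteEdges {s(u1, v1), s(a2, b2)}).Connected := by
    have hss : ({s(u1, v1), s(a2, b2)} : Set (Sym2 V)) ⊂ {s(u1, v1), s(a2, b2), s(a3, b3)} := by
      refine (Set.ssubset_iff_of_subset ?_).mpr ⟨s(a3, b3), by simp, ?_⟩
      · intro x hx
        simp only [Set.mem_insert_iff, Set.mem_singleton_iff] at hx ⊢
        tauto
      · simp only [Set.mem_insert_iff, Set.mem_singleton_iff, not_or]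
        exact ⟨hf3_ne_e1, hf3_ne_f2⟩
    have h := hmin _ hss
    rw [IsDisconnectingSet] at h
    push_neg at h
    apply h
    intro x hx
    rcases hx with h' | h'
    · exact h' ▸ he1
    · exact (Set.mem_singleton_iff.mp h') ▸ hf2
  have hconn13 : (G.deleteEdges {s(u1, v1), s(a3, b3)}).Connected := by
    have hss : ({s(u1, v1), s(a3, b3)} : Set (Sym2 V)) ⊂ {s(u1, v1), s(a2, b2), s(a3, b3)} := by
      refine (Set.ssubset_iff_of_subset ?_).mpr ⟨s(a2, b2), by simp, ?_⟩
      · intro x hx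
        simp only [Set.mem_insert_iff, Set.mem_singleton_iff] at hx ⊢
        tauto
      · simp only [Set.mem_insert_iff, Set.mem_singleton_iff, not_or]
        exact ⟨hf2_ne_e1, fun h => hf3_ne_f2 h.symm⟩
    have h := hmin _ hss
    rw [IsDisconnectingSet] at h
    push_neg at h
    apply h
    intro x hx
    rcases hx with h' | h'
    · exact h' ▸ he1
    · exact (Set.mem_singleton_iff.mp h') ▸ hf3
  -- key lemma 1: vertices of S1 reach u2 in G - {e1, f2, f3}
  have key1 : ∀ (x y : V) (w : (G.deleteEdges {s(u1, v1), s(a2, b2)}).Walk x y),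
      y = u2 → x ∈ S1 →
      (G.deleteEdges {s(u1, v1), s(a2, b2), s(a3, b3)}).Reachable x u2 := by
    intro x y w
    induction w with
    | nil => intro h _; subst h; exact Reachable.refl _
    | cons h p ih =>
      rename_i a b c
      intro hy ha
      rw [SimpleGraph.deleteEdges_adj] at h
      obtain ⟨hab, hne⟩ := h
      simp only [Set.mem_insert_iff, Set.mem_singleton_iff, not_or] at hne
      by_cases hcase : s(a, b) = s(u2, v2)
      · rw [Sym2.eq_iff] at hcase
        rcases hcase with ⟨rfl, rfl⟩ | ⟨rfl, rfl⟩
        · exact Reachable.refl _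
        · exact absurd hv2 (fun h2 => hdis12 a ha h2)
      · have hb : b ∈ S1 := by
          refine hS1closed a b ha ?_
          rw [SimpleGraph.deleteEdges_adj]
          refine ⟨hab, ?_⟩
          simp only [Set.mem_insert_iff, Set.mem_singleton_iff, not_or]
          exact ⟨hne.1, hcase⟩
        have hadj : (G.deleteEdges {s(u1, v1), s(a2, b2), s(a3, b3)}).Adj a b := by
          rw [SimpleGraph.deleteEdges_adj]
          refine ⟨hab, ?_⟩
          simp only [Set.mem_insert_iff, Set.mem_singleton_iff, not_or]
          refine ⟨hne.1, hne.2, fun heq => ?_⟩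
          have : a ∈ s(a3, b3) := heq ▸ (by simp)
          rcases Sym2.mem_iff.mp this with rfl | rfl
          · exact hdis12 a ha ha3
          · exact hdis12 a ha hb3
        exact hadj.reachable.trans (ih hy hb)
  -- key lemma 2: vertices of S2 reach v2 in G - {e1, f2, f3}
  have key2 : ∀ (x y : V) (w : (G.deleteEdges {s(u1, v1), s(a3, b3)}).Walk x y),
      y = v2 → x ∈ S2 →
      (G.deleteEdges {s(u1, v1), s(a2, b2), s(a3, b3)}).Reachable x v2 := by
    intro x y w
    induction w with
    | nil => intro h _; subst h; exact Reachable.refl _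
    | cons h p ih =>
      rename_i a b c
      intro hy ha
      rw [SimpleGraph.deleteEdges_adj] at h
      obtain ⟨hab, hne⟩ := h
      simp only [Set.mem_insert_iff, Set.mem_singleton_iff, not_or] at hne
      by_cases hcase : s(a, b) = s(u2, v2)
      · rw [Sym2.eq_iff] at hcase
        rcases hcase with ⟨rfl, rfl⟩ | ⟨rfl, rfl⟩
        · exact absurd hu2 (fun h2 => hdis12 a h2 ha)
        · exact Reachable.refl _
      · have hb : b ∈ S2 := by
          refine hS2closed a b ha ?_
          rw [SimpleGraph.deleteEdges_adj]
          refine ⟨hab, ?_⟩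
          simp only [Set.mem_insert_iff, Set.mem_singleton_iff, not_or]
          exact ⟨hne.1, hcase⟩
        have hadj : (G.deleteEdges {s(u1, v1), s(a2, b2), s(a3, b3)}).Adj a b := by
          rw [SimpleGraph.deleteEdges_adj]
          refine ⟨hab, ?_⟩
          simp only [Set.mem_insert_iff, Set.mem_singleton_iff, not_or]
          refine ⟨hne.1, fun heq => ?_, hne.2⟩
          have : a ∈ s(a2, b2) := heq ▸ (by simp)
          rcases Sym2.mem_iff.mp this with rfl | rfl
          · exact hdis12 a ha2 ha
          · exact hdis12 a hb2 ha
        exact hadj.reachable.trans (ih hy hb)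
  -- the edge e2 survives in G - {e1, f2, f3}
  have he2D : (G.deleteEdges {s(u1, v1), s(a2, b2), s(a3, b3)}).Adj v2 u2 := by
    rw [SimpleGraph.deleteEdges_adj]
    refine ⟨he2.symm, ?_⟩
    simp only [Set.mem_insert_iff, Set.mem_singleton_iff, not_or]
    refine ⟨fun h => ?_, fun h => ?_, fun h => ?_⟩
    · rw [Sym2.eq_iff] at h
      rcases h with ⟨rfl, rfl⟩ | ⟨rfl, rfl⟩
      · exact hdis12 v2 hu1 hv2
      · exact hvv rfl
    · have : v2 ∈ s(a2, b2) := h ▸ (by simp)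
      rcases Sym2.mem_iff.mp this with rfl | rfl
      · exact hdis12 v2 ha2 hv2
      · exact hdis12 v2 hb2 hv2
    · have : u2 ∈ s(a3, b3) := h ▸ (by simp)
      rcases Sym2.mem_iff.mp this with rfl | rfl
      · exact hdis12 u2 hu2 ha3
      · exact hdis12 u2 hu2 hb3
  have hreach : ∀ x : V, (G.deleteEdges {s(u1, v1), s(a2, b2), s(a3, b3)}).Reachable x u2 := by
    intro x
    have hx : x ∈ S1 ∪ S2 := by rw [hUnion]; trivial
    rcases hx with hx | hx
    · obtain ⟨w⟩ := hconn12.preconnected x u2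
      exact key1 x u2 w rfl hx
    · obtain ⟨w⟩ := hconn13.preconnected x v2
      exact (key2 x v2 w rfl hx).trans he2D.reachable
  apply hCdisc
  rw [SimpleGraph.connected_iff]
  exact ⟨fun x y => (hreach x).trans (hreach y).symm, ⟨u2⟩⟩
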